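/- Let G be a finite simple bipartite graph. If G is vertex decomposable, then Shed(G) is a dominating set of G. -/
import Mathlib


open scoped Classical

variable {V : Type*}

/-- `S` is an independent set of the induced subgraph of `G` on the vertex set `A`. -/
def IsIndepIn (G : SimpleGraph V) (A S : Finset V) : Prop :=
  S ⊆ A ∧ ∀ u ∈ S, ∀ v ∈ S, ¬ G.Adj u v

/-- `S` is a maximal independent set of the induced subgraph of `G` on the vertex set `A`. -/
def IsMaxIndepIn (G : SimpleGraph V) (A S : Finset V) : Prop :=
  IsIndepIn G A S ∧ ∀ T, IsIndepIn G A T → S ⊆ T → T = S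

/-- The induced subgraph of `G` on the vertex set `A` is well-covered: all of its
maximal independent sets have the same cardinality. -/
def WellCoveredOn (G : SimpleGraph V) (A : Finset V) : Prop :=
  ∀ S T, IsMaxIndepIn G A S → IsMaxIndepIn G A T → S.card = T.card

/-- The closed neighbourhood of `x` deleted from `A`: the vertices of `A` distinct from `x`
and not adjacent to `x`. -/
noncomputable def delClosedNbhd (G : SimpleGraph V) (A : Finset V) (x : V) : Finset V :=
  A.filter fun y => y ≠ x ∧ ¬ G.Adj x y

/-- The induced subgraph of `G` on the vertex set `A` is vertex decomposable: it is
well-covered, and either it has no edges, or some vertex `x ∈ A` is such that deleting `x`,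
respectively the closed neighbourhood of `x`, leaves a vertex decomposable graph. -/
def VertexDecomposableOn (G : SimpleGraph V) (A : Finset V) : Prop :=
  WellCoveredOn G A ∧
    ((∀ u ∈ A, ∀ v ∈ A, ¬ G.Adj u v) ∨
      ∃ x, ∃ _h : x ∈ A,
        VertexDecomposableOn G (A.erase x) ∧
        VertexDecomposableOn G (delClosedNbhd G A x))
termination_by A.card
decreasing_by
  · exact Finset.card_erase_lt_of_mem (by assumption)
  · exact Finset.card_lt_card
      (Finset.filter_ssubset.mpr ⟨x, by assumption, by simp⟩)

/-- A finite simple graph is well-covered if all of its maximal independent sets have the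
same cardinality. -/
def WellCovered (G : SimpleGraph V) [Fintype V] : Prop :=
  WellCoveredOn G Finset.univ

/-- A finite simple graph is vertex decomposable. -/
def VertexDecomposable (G : SimpleGraph V) [Fintype V] : Prop :=
  VertexDecomposableOn G Finset.univ

/-- The set of shedding vertices of `G` : those vertices `x` such that both `G \ x` and
`G \ N[x]` are vertex decomposable. -/
def Shed (G : SimpleGraph V) [Fintype V] : Set V :=
  {x | VertexDecomposableOn G (Finset.univ.erase x) ∧
       VertexDecomposableOn G (delClosedNbhd G Finset.univ x)}

/-- `D` is a dominating set of `G`: every vertex not in `D` is adjacent to a vertex of `D`. -/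
def IsDominatingSet (G : SimpleGraph V) (D : Set V) : Prop :=
  ∀ v, v ∉ D → ∃ u ∈ D, G.Adj u v

/-- A vertex is simplicial if its neighbourhood induces a clique. -/
def IsSimplicialVertex (G : SimpleGraph V) (x : V) : Prop :=
  ∀ u v, G.Adj x u → G.Adj x v → u ≠ v → G.Adj u v

namespace Work
variable {V : Type*} {G : SimpleGraph V} {A S T : Finset V} {x y v u w : V}

lemma mem_delN : y ∈ delClosedNbhd G A x ↔ y ∈ A ∧ y ≠ x ∧ ¬ G.Adj x y := by
  simp [delClosedNbhd]

lemma delN_subset : delClosedNbhd G A x ⊆ A := Finset.filter_subset _ _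

lemma ind_subset (h : IsIndepIn G A T) (hST : S ⊆ T) : IsIndepIn G A S :=
  ⟨hST.trans h.1, fun a ha b hb => h.2 a (hST ha) b (hST hb)⟩

lemma ind_mono {B : Finset V} (h : IsIndepIn G A S) (hAB : A ⊆ B) : IsIndepIn G B S :=
  ⟨h.1.trans hAB, h.2⟩

lemma ind_restrict {B : Finset V} (h : IsIndepIn G A S) (hSB : S ⊆ B) : IsIndepIn G B S :=
  ⟨hSB, h.2⟩

lemma not_adj_of_ind (h : IsIndepIn G A S) (hu : u ∈ S) (hv : v ∈ S) : ¬ G.Adj u v :=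
  h.2 u hu v hv

/-- every independent set extends to a maximal one -/
lemma exists_max (G : SimpleGraph V) (A : Finset V) :
    ∀ (n : ℕ) (S : Finset V), (A \ S).card ≤ n → IsIndepIn G A S →
      ∃ T, S ⊆ T ∧ IsMaxIndepIn G A T := by
  intro n
  induction n with
  | zero =>
    intro S hc hS
    refine ⟨S, Finset.Subset.refl _, hS, ?_⟩
    intro T hT hST
    by_contra hne
    obtain ⟨z, hzT, hzS⟩ := Finset.exists_of_ssubset (lt_of_le_of_ne hST (Ne.symm hne))
    have : z ∈ A \ S := Finset.mem_sdiff.mpr ⟨hT.1 hzT, hzS⟩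
    have := Finset.card_pos.mpr ⟨z, this⟩
    omega
  | succ n IH =>
    intro S hc hS
    by_cases hmax : ∀ T, IsIndepIn G A T → S ⊆ T → T = S
    · exact ⟨S, Finset.Subset.refl _, hS, hmax⟩
    · push_neg at hmax
      obtain ⟨T, hT, hST, hne⟩ := hmax
      obtain ⟨z, hzT, hzS⟩ := Finset.exists_of_ssubset (lt_of_le_of_ne hST (Ne.symm hne))
      have hzA : z ∈ A := hT.1 hzT
      have hc' : (A \ insert z S).card ≤ n := by
        have h1 : A \ insert z S = (A \ S).erase z := by
          ext a; simp [Finset.mem_sdiff, Finset.mem_erase]; tauto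
        have h2 : z ∈ A \ S := Finset.mem_sdiff.mpr ⟨hzA, hzS⟩
        rw [h1]
        have := Finset.card_erase_of_mem h2
        omega
      obtain ⟨T', h1, h2⟩ := IH (insert z S) hc' (ind_subset hT (Finset.insert_subset hzT hST))
      exact ⟨T', (Finset.subset_insert z S).trans h1, h2⟩

lemma exists_max' (hS : IsIndepIn G A S) : ∃ T, S ⊆ T ∧ IsMaxIndepIn G A T :=
  exists_max G A (A \ S).card S le_rfl hS

lemma singleton_ind (hv : v ∈ A) : IsIndepIn G A {v} := by
  refine ⟨by simpa using hv, ?_⟩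
  intro a ha b hb
  simp only [Finset.mem_singleton] at ha hb
  subst ha; subst hb; simp

lemma exists_max_mem (hv : v ∈ A) : ∃ T, v ∈ T ∧ IsMaxIndepIn G A T := by
  obtain ⟨T, hT1, hT2⟩ := exists_max' (singleton_ind hv (G := G))
  exact ⟨T, hT1 (Finset.mem_singleton_self v), hT2⟩

lemma vd_wc (h : VertexDecomposableOn G A) : WellCoveredOn G A := by
  rw [VertexDecomposableOn] at h; exact h.1

lemma vd_cases (h : VertexDecomposableOn G A) :
    (∀ u ∈ A, ∀ v ∈ A, ¬ G.Adj u v) ∨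
      ∃ x, ∃ _h : x ∈ A, VertexDecomposableOn G (A.erase x) ∧
        VertexDecomposableOn G (delClosedNbhd G A x) := by
  rw [VertexDecomposableOn] at h; exact h.2

lemma vd_glue (hwc : WellCoveredOn G A) (hx : x ∈ A)
    (h1 : VertexDecomposableOn G (A.erase x))
    (h2 : VertexDecomposableOn G (delClosedNbhd G A x)) :
    VertexDecomposableOn G A := by
  rw [VertexDecomposableOn]; exact ⟨hwc, Or.inr ⟨x, hx, h1, h2⟩⟩

lemma wc_edgeless (h : ∀ u ∈ A, ∀ v ∈ A, ¬ G.Adj u v) : WellCoveredOn G A := by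
  have key : ∀ S, IsMaxIndepIn G A S → S = A := by
    intro S hS
    have : IsIndepIn G A A := ⟨Finset.Subset.refl _, h⟩
    exact (hS.2 A this hS.1.1).symm ▸ (hS.2 A this hS.1.1)
  intro S T hS hT
  rw [key S hS, key T hT]

lemma vd_edgeless (h : ∀ u ∈ A, ∀ v ∈ A, ¬ G.Adj u v) : VertexDecomposableOn G A := by
  rw [VertexDecomposableOn]; exact ⟨wc_edgeless h, Or.inl h⟩

lemma ind_insert {G : SimpleGraph V} {A T : Finset V} {v : V}
    (hT : IsIndepIn G A T) (hv : v ∈ A) (h : ∀ t ∈ T, ¬ G.Adj v t) :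
    IsIndepIn G A (insert v T) := by
  refine ⟨Finset.insert_subset hv hT.1, ?_⟩
  intro a ha b hb
  rcases Finset.mem_insert.mp ha with h1 | h1
  · rcases Finset.mem_insert.mp hb with h2 | h2
    · subst h1; subst h2; simp
    · subst h1; exact h b h2
  · rcases Finset.mem_insert.mp hb with h2 | h2
    · subst h2; exact fun hab => h a h1 hab.symm
    · exact hT.2 a h1 b h2

lemma ind_pair {G : SimpleGraph V} {A : Finset V} {v w : V}
    (hv : v ∈ A) (hw : w ∈ A) (hvw : v ≠ w) (h : ¬ G.Adj v w) :
    IsIndepIn G A {v, w} := by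
  have : IsIndepIn G A {w} := singleton_ind hw
  exact ind_insert this hv (by
    intro t ht
    rw [Finset.mem_singleton.mp ht]
    exact h)

end Work

namespace Work
variable {V : Type*} {G : SimpleGraph V} {A S T U : Finset V} {x y v u w : V}

lemma exists_nbr_of_max (hT : IsMaxIndepIn G A T) (hv : v ∈ A) (hvT : v ∉ T) :
    ∃ t ∈ T, G.Adj v t := by
  by_contra h
  push_neg at h
  have hind : IsIndepIn G A (insert v T) := ind_insert hT.1 hv h
  have := hT.2 _ hind (Finset.subset_insert v T)
  exact hvT (this ▸ Finset.mem_insert_self v T)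

lemma max_restrict (hT : IsMaxIndepIn G A T) (hvT : v ∉ T) :
    IsMaxIndepIn G (A.erase v) T := by
  refine ⟨⟨fun z hz => Finset.mem_erase.mpr ⟨fun h => hvT (h ▸ hz), hT.1.1 hz⟩, hT.1.2⟩, ?_⟩
  intro U hU hTU
  exact hT.2 U ⟨hU.1.trans (Finset.erase_subset v A), hU.2⟩ hTU

lemma x_notMem_delN : x ∉ delClosedNbhd G A x := by
  simp [mem_delN]

lemma max_insert_delN (hS : IsMaxIndepIn G (delClosedNbhd G A x) S) (hx : x ∈ A) :
    IsMaxIndepIn G A (insert x S) := by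
  have hSsub : S ⊆ delClosedNbhd G A x := hS.1.1
  have hxS : x ∉ S := fun h => x_notMem_delN (hSsub h)
  refine ⟨ind_insert ⟨hSsub.trans delN_subset, hS.1.2⟩ hx
    (fun t ht => (mem_delN.mp (hSsub ht)).2.2), ?_⟩
  · intro U hU hsub
    have hxU : x ∈ U := hsub (Finset.mem_insert_self x S)
    have hUsub : U.erase x ⊆ delClosedNbhd G A x := by
      intro z hz
      obtain ⟨hzx, hzU⟩ := Finset.mem_erase.mp hz
      exact mem_delN.mpr ⟨hU.1 hzU, hzx, hU.2 x hxU z hzU⟩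
    have hUx : IsIndepIn G (delClosedNbhd G A x) (U.erase x) :=
      ⟨hUsub, fun a ha b hb => hU.2 a (Finset.mem_of_mem_erase ha) b (Finset.mem_of_mem_erase hb)⟩
    have hSsub' : S ⊆ U.erase x := fun z hz =>
      Finset.mem_erase.mpr ⟨fun h => hxS (h ▸ hz), hsub (Finset.mem_insert_of_mem hz)⟩
    have := hS.2 _ hUx hSsub'
    rw [← this, Finset.insert_erase hxU]

lemma max_erase_lift (hs : s ∈ A) (hT : IsMaxIndepIn G (A.erase s) T) :
    IsMaxIndepIn G A T ∨ IsMaxIndepIn G A (insert s T) := by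
  by_cases hmax : ∀ U, IsIndepIn G A U → T ⊆ U → U = T
  · exact Or.inl ⟨⟨hT.1.1.trans (Finset.erase_subset s A), hT.1.2⟩, hmax⟩
  · push_neg at hmax
    obtain ⟨U, hU, hTU, hne⟩ := hmax
    obtain ⟨z, hzU, hzT⟩ := Finset.exists_of_ssubset (lt_of_le_of_ne hTU (Ne.symm hne))
    have hzs : z = s := by
      by_contra hzs
      have : IsIndepIn G (A.erase s) (insert z T) :=
        ind_insert hT.1 (Finset.mem_erase.mpr ⟨hzs, hU.1 hzU⟩)
          (fun t ht => hU.2 z hzU t (hTU ht))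
      have := hT.2 _ this (Finset.subset_insert z T)
      exact hzT (this ▸ Finset.mem_insert_self z T)
    subst hzs
    have hind : IsIndepIn G A (insert z T) :=
      ind_subset hU (Finset.insert_subset hzU hTU)
    right
    refine ⟨hind, ?_⟩
    intro W hW hsub
    by_contra hne'
    obtain ⟨a, haW, haT⟩ := Finset.exists_of_ssubset
      (lt_of_le_of_ne hsub (Ne.symm hne'))
    have haz : a ≠ z := fun h => haT (h ▸ Finset.mem_insert_self z T)
    have : IsIndepIn G (A.erase z) (insert a T) :=
      ind_insert hT.1 (Finset.mem_erase.mpr ⟨haz, hW.1 haW⟩)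
        (fun t ht => hW.2 a haW t (hsub (Finset.mem_insert_of_mem ht)))
    have := hT.2 _ this (Finset.subset_insert a T)
    exact (fun h => haT (Finset.mem_insert_of_mem h)) (this ▸ Finset.mem_insert_self a T)

lemma wc_delN (hwc : WellCoveredOn G A) (hx : x ∈ A) :
    WellCoveredOn G (delClosedNbhd G A x) := by
  intro S T hS hT
  have h1 := max_insert_delN hS hx
  have h2 := max_insert_delN hT hx
  have := hwc _ _ h1 h2
  have hxS : x ∉ S := fun h => x_notMem_delN (hS.1.1 h)
  have hxT : x ∉ T := fun h => x_notMem_delN (hT.1.1 h)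
  rw [Finset.card_insert_of_notMem hxS, Finset.card_insert_of_notMem hxT] at this
  omega

section Pendant
variable (hwA : w ∈ A) (huA : u ∈ A) (hadj : G.Adj u w)
  (hpend : ∀ z ∈ A, G.Adj z w → z = u)

include hwA huA hadj hpend

lemma pendant_mem_max (hS : IsMaxIndepIn G (A.erase u) S) : w ∈ S := by
  by_contra hwS
  have hwu : w ≠ u := fun h => G.irrefl (h ▸ hadj)
  obtain ⟨t, htS, hadj'⟩ := exists_nbr_of_max hS (Finset.mem_erase.mpr ⟨hwu, hwA⟩) hwS
  have := hpend t (Finset.mem_of_mem_erase (hS.1.1 htS)) hadj'.symm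
  subst this
  exact (Finset.mem_erase.mp (hS.1.1 htS)).1 rfl

lemma max_erase_pendant (hS : IsMaxIndepIn G (A.erase u) S) : IsMaxIndepIn G A S := by
  have hwS : w ∈ S := pendant_mem_max hwA huA hadj hpend hS
  refine ⟨⟨hS.1.1.trans (Finset.erase_subset u A), hS.1.2⟩, ?_⟩
  intro U hU hSU
  have hUsub : U ⊆ A.erase u := by
    intro z hz
    refine Finset.mem_erase.mpr ⟨?_, hU.1 hz⟩
    rintro rfl
    exact hU.2 z hz w (hSU hwS) hadj
  exact hS.2 U ⟨hUsub, hU.2⟩ hSU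

lemma wc_erase_pendant (hwc : WellCoveredOn G A) : WellCoveredOn G (A.erase u) :=
  fun S T hS hT => hwc S T (max_erase_pendant hwA huA hadj hpend hS)
    (max_erase_pendant hwA huA hadj hpend hT)

lemma lemma_P (hwc : WellCoveredOn G A) (hwc' : WellCoveredOn G (A.erase w)) :
    ∀ t ∈ A, G.Adj t u → t = w := by
  intro t htA hadjtu
  by_contra htw
  have htu : t ≠ u := G.ne_of_adj hadjtu
  have hwu : w ≠ u := fun h => G.irrefl (h ▸ hadj)
  have hntw : ¬ G.Adj t w := fun h => htu (hpend t htA h)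
  have hind : IsIndepIn G A {w, t} :=
    ind_pair hwA htA (Ne.symm htw) (fun h => hntw h.symm)
  obtain ⟨T, hsubT, hT⟩ := exists_max' hind
  have hwT : w ∈ T := hsubT (Finset.mem_insert_self w _)
  have htT : t ∈ T := hsubT (by simp)
  obtain ⟨S, huS, hS⟩ := exists_max_mem (G := G) huA
  have hwS : w ∉ S := fun h => hS.1.2 u huS w h hadj
  have hSmax' : IsMaxIndepIn G (A.erase w) S := max_restrict hS hwS
  -- T.erase w is maximal in A.erase w
  have hTmax' : IsMaxIndepIn G (A.erase w) (T.erase w) := by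
    refine ⟨⟨?_, fun a ha b hb => hT.1.2 a (Finset.mem_of_mem_erase ha)
      b (Finset.mem_of_mem_erase hb)⟩, ?_⟩
    · intro z hz
      obtain ⟨hzw, hzT⟩ := Finset.mem_erase.mp hz
      exact Finset.mem_erase.mpr ⟨hzw, hT.1.1 hzT⟩
    · intro U hU hsub
      refine Finset.Subset.antisymm ?_ hsub
      intro z hzU
      by_contra hz
      have hzw : z ≠ w := fun h => (Finset.mem_erase.mp (hU.1 hzU)).1 h
      have hzT : z ∉ T := fun h => hz (Finset.mem_erase.mpr ⟨hzw, h⟩)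
      obtain ⟨s, hsT, hadj_zs⟩ := exists_nbr_of_max hT
        (Finset.mem_of_mem_erase (hU.1 hzU)) hzT
      by_cases hsw : s = w
      · subst hsw
        have := hpend z (Finset.mem_of_mem_erase (hU.1 hzU)) hadj_zs
        subst this
        exact hU.2 z hzU t (hsub (Finset.mem_erase.mpr ⟨htw, htT⟩)) hadjtu.symm
      · exact hU.2 z hzU s (hsub (Finset.mem_erase.mpr ⟨hsw, hsT⟩)) hadj_zs
  have h1 := hwc' _ _ hTmax' hSmax'
  have h2 := hwc _ _ hT hS
  have h3 := Finset.card_erase_of_mem hwT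
  have : 0 < T.card := Finset.card_pos.mpr ⟨w, hwT⟩
  omega

end Pendant
end Work

namespace Work
variable {V : Type*} {G : SimpleGraph V} {A : Finset V} {x v u w : V}

lemma delN_erase_comm :
    delClosedNbhd G (A.erase v) x = (delClosedNbhd G A x).erase v := by
  ext z
  simp only [mem_delN, Finset.mem_erase]
  tauto

lemma delN_delN_comm :
    delClosedNbhd G (delClosedNbhd G A u) x = delClosedNbhd G (delClosedNbhd G A x) u := by
  ext z
  simp only [mem_delN]
  tauto

lemma delN_eq_of_adj (h : G.Adj u x) :
    delClosedNbhd G (A.erase x) u = delClosedNbhd G A u := by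
  ext z
  simp only [mem_delN, Finset.mem_erase]
  constructor
  · rintro ⟨⟨h1, h2⟩, h3, h4⟩; exact ⟨h2, h3, h4⟩
  · rintro ⟨h1, h2, h3⟩
    exact ⟨⟨fun hzx => h3 (hzx ▸ h), h1⟩, h2, h3⟩

lemma delN_eq_erase_of_isolated (h : ∀ z ∈ A, ¬ G.Adj v z) :
    delClosedNbhd G A v = A.erase v := by
  ext z
  simp only [mem_delN, Finset.mem_erase]
  exact ⟨fun ⟨h1, h2, _⟩ => ⟨h2, h1⟩, fun ⟨h1, h2⟩ => ⟨h2, h1, h z h2⟩⟩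

lemma delN_pendant (hadj : G.Adj u w) (hNu : ∀ z ∈ A, G.Adj z u → z = w) :
    delClosedNbhd G A u = (A.erase u).erase w := by
  ext z
  simp only [mem_delN, Finset.mem_erase]
  constructor
  · rintro ⟨h1, h2, h3⟩
    exact ⟨fun hzw => h3 (hzw ▸ hadj), h2, h1⟩
  · rintro ⟨h1, h2, h3⟩
    exact ⟨h3, h2, fun hadj' => h1 (hNu z h3 hadj'.symm)⟩

lemma delN_subset_erase (hx : x ∈ A) : delClosedNbhd G A x ⊆ A.erase x := by
  intro z hz
  obtain ⟨h1, h2, h3⟩ := mem_delN.mp hz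
  exact Finset.mem_erase.mpr ⟨h2, h1⟩

lemma max_insert_isolated {S : Finset V} (hv : v ∈ A) (hiso : ∀ z ∈ A, ¬ G.Adj v z)
    (hS : IsMaxIndepIn G (A.erase v) S) : IsMaxIndepIn G A (insert v S) := by
  have hvS : v ∉ S := fun h => (Finset.mem_erase.mp (hS.1.1 h)).1 rfl
  refine ⟨ind_insert ⟨hS.1.1.trans (Finset.erase_subset v A), hS.1.2⟩ hv
    (fun t ht => hiso t (Finset.mem_of_mem_erase (hS.1.1 ht))), ?_⟩
  intro U hU hsub
  have hvU : v ∈ U := hsub (Finset.mem_insert_self v S)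
  have : IsIndepIn G (A.erase v) (U.erase v) := by
    refine ⟨?_, fun a ha b hb => hU.2 a (Finset.mem_of_mem_erase ha)
      b (Finset.mem_of_mem_erase hb)⟩
    intro z hz
    exact Finset.mem_erase.mpr ⟨(Finset.mem_erase.mp hz).1, hU.1 (Finset.mem_of_mem_erase hz)⟩
  have hSsub : S ⊆ U.erase v := fun z hz =>
    Finset.mem_erase.mpr ⟨fun h => hvS (h ▸ hz), hsub (Finset.mem_insert_of_mem hz)⟩
  have := hS.2 _ this hSsub
  rw [← this, Finset.insert_erase hvU]

lemma wc_erase_isolated (hwc : WellCoveredOn G A) (hv : v ∈ A)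
    (hiso : ∀ z ∈ A, ¬ G.Adj v z) : WellCoveredOn G (A.erase v) := by
  intro S T hS hT
  have h1 := max_insert_isolated hv hiso hS
  have h2 := max_insert_isolated hv hiso hT
  have := hwc _ _ h1 h2
  have hvS : v ∉ S := fun h => (Finset.mem_erase.mp (hS.1.1 h)).1 rfl
  have hvT : v ∉ T := fun h => (Finset.mem_erase.mp (hT.1.1 h)).1 rfl
  rw [Finset.card_insert_of_notMem hvS, Finset.card_insert_of_notMem hvT] at this
  omega

lemma vd_erase_isolated_aux :
    ∀ (n : ℕ) (A : Finset V), A.card ≤ n → VertexDecomposableOn G A →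
      ∀ v ∈ A, (∀ z ∈ A, ¬ G.Adj v z) → VertexDecomposableOn G (A.erase v) := by
  intro n
  induction n with
  | zero =>
    intro A hc _ v hv _
    exact absurd (Finset.card_pos.mpr ⟨v, hv⟩) (by omega)
  | succ n IH =>
    intro A hc hvd v hv hiso
    rcases vd_cases hvd with hedge | ⟨x, hxA, h1, h2⟩
    · exact vd_edgeless (fun a ha b hb =>
        hedge a (Finset.mem_of_mem_erase ha) b (Finset.mem_of_mem_erase hb))
    · by_cases hxv : x = v
      · subst hxv; exact h1
      · have hcard : (A.erase x).card ≤ n := by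
          have := Finset.card_erase_of_mem hxA
          have : 0 < A.card := Finset.card_pos.mpr ⟨v, hv⟩
          have := Finset.card_erase_of_mem hxA
          omega
        have hcard2 : (delClosedNbhd G A x).card ≤ n := by
          have h := Finset.card_le_card (delN_subset_erase hxA (G := G))
          have := Finset.card_erase_of_mem hxA
          have : 0 < A.card := Finset.card_pos.mpr ⟨v, hv⟩
          omega
        have hvx : v ∈ A.erase x := Finset.mem_erase.mpr ⟨fun h => hxv h.symm, hv⟩
        have ihA : VertexDecomposableOn G ((A.erase x).erase v) :=
          IH _ hcard h1 v hvx
            (fun z hz => hiso z (Finset.mem_of_mem_erase hz))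
        have hvB : v ∈ delClosedNbhd G A x :=
          mem_delN.mpr ⟨hv, fun h => hxv h.symm, fun h => hiso x hxA h.symm⟩
        have ihB : VertexDecomposableOn G ((delClosedNbhd G A x).erase v) :=
          IH _ hcard2 h2 v hvB
            (fun z hz => hiso z (delN_subset hz))
        refine vd_glue (wc_erase_isolated (vd_wc hvd) hv hiso)
          (Finset.mem_erase.mpr ⟨hxv, hxA⟩) ?_ ?_
        · rw [Finset.erase_right_comm]; exact ihA
        · rw [delN_erase_comm]; exact ihB

lemma vd_erase_isolated (hvd : VertexDecomposableOn G A) (hv : v ∈ A)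
    (hiso : ∀ z ∈ A, ¬ G.Adj v z) : VertexDecomposableOn G (A.erase v) :=
  vd_erase_isolated_aux A.card A le_rfl hvd v hv hiso

end Work

namespace Work
variable {V : Type*} {G : SimpleGraph V}

lemma pendant_shed_aux :
    ∀ (n : ℕ) (A : Finset V), A.card ≤ n → VertexDecomposableOn G A →
      ∀ u w, u ∈ A → w ∈ A → G.Adj u w → (∀ z ∈ A, G.Adj z w → z = u) →
      VertexDecomposableOn G (A.erase u) ∧ VertexDecomposableOn G (delClosedNbhd G A u) := by
  intro n
  induction n with
  | zero =>
    intro A hc _ u w hu _ _ _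
    exact absurd (Finset.card_pos.mpr ⟨u, hu⟩) (by omega)
  | succ n IH =>
    intro A hc hvd u w huA hwA hadj hpend
    have hwcA := vd_wc hvd
    rcases vd_cases hvd with hedge | ⟨x, hxA, h1, h2⟩
    · exact absurd hadj (hedge u huA w hwA)
    · have hApos : 0 < A.card := Finset.card_pos.mpr ⟨u, huA⟩
      have hcard : ∀ B : Finset V, B ⊆ A.erase x → B.card ≤ n := by
        intro B hB
        have := Finset.card_le_card hB
        have := Finset.card_erase_of_mem hxA
        omega
      have hwcAu : WellCoveredOn G (A.erase u) :=
        wc_erase_pendant hwA huA hadj hpend hwcA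
      by_cases hxu : x = u
      · subst hxu; exact ⟨h1, h2⟩
      · by_cases hxw : x = w
        · subst hxw
          -- x = w : pendant itself is the shedding vertex
          have hNu : ∀ t ∈ A, G.Adj t u → t = x :=
            lemma_P hxA huA hadj hpend hwcA (vd_wc h1)
          have hBeq : delClosedNbhd G A x = (A.erase x).erase u :=
            delN_pendant hadj.symm (fun z hz hadj' => hpend z hz hadj')
          have hBeq2 : delClosedNbhd G A u = (A.erase u).erase x :=
            delN_pendant hadj (fun z hz hadj' => hNu z hz hadj')
          have hcomm : (A.erase u).erase x = (A.erase x).erase u :=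
            Finset.erase_right_comm
          constructor
          · -- VD (A.erase u) : glue with shedding vertex x(=w)
            refine vd_glue hwcAu
              (Finset.mem_erase.mpr ⟨hxu, hxA⟩) ?_ ?_
            · rw [Finset.erase_right_comm, ← hBeq]; exact h2
            · have : delClosedNbhd G (A.erase u) x = (A.erase u).erase x := by
                ext z
                simp only [mem_delN, Finset.mem_erase]
                constructor
                · rintro ⟨⟨h1', h2'⟩, h3, h4⟩; exact ⟨h3, h1', h2'⟩
                · rintro ⟨h1', h2', h3⟩
                  refine ⟨⟨h2', h3⟩, h1', fun hadj' => h2' (hpend z h3 hadj'.symm)⟩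
              rw [this, hcomm, ← hBeq]; exact h2
          · rw [hBeq2, hcomm, ← hBeq]; exact h2
        · -- x ≠ u, x ≠ w
          have huA' : u ∈ A.erase x := Finset.mem_erase.mpr ⟨fun h => hxu h.symm, huA⟩
          have hwA' : w ∈ A.erase x := Finset.mem_erase.mpr ⟨fun h => hxw h.symm, hwA⟩
          have hpend' : ∀ z ∈ A.erase x, G.Adj z w → z = u :=
            fun z hz hadj' => hpend z (Finset.mem_of_mem_erase hz) hadj'
          obtain ⟨hA'e, hA'd⟩ := IH (A.erase x) (hcard _ (Finset.Subset.refl _)) h1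
            u w huA' hwA' hadj hpend'
          by_cases hxNu : G.Adj u x
          · -- x is a neighbour of u
            constructor
            · refine vd_glue hwcAu (Finset.mem_erase.mpr ⟨hxu, hxA⟩) ?_ ?_
              · rw [Finset.erase_right_comm]; exact hA'e
              · rw [delN_erase_comm]
                have : u ∉ delClosedNbhd G A x :=
                  fun h => (mem_delN.mp h).2.2 hxNu.symm
                rw [Finset.erase_eq_of_notMem this]; exact h2
            · rw [← delN_eq_of_adj hxNu]; exact hA'd
          · -- x not adjacent to u
            have huB : u ∈ delClosedNbhd G A x :=
              mem_delN.mpr ⟨huA, fun h => hxu h.symm, fun h => hxNu h.symm⟩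
            have hwB : w ∈ delClosedNbhd G A x :=
              mem_delN.mpr ⟨hwA, fun h => hxw h.symm,
                fun h => hxu (hpend x hxA h)⟩
            have hpendB : ∀ z ∈ delClosedNbhd G A x, G.Adj z w → z = u :=
              fun z hz hadj' => hpend z (delN_subset hz) hadj'
            obtain ⟨hBe, hBd⟩ := IH (delClosedNbhd G A x)
              (hcard _ (delN_subset_erase hxA)) h2 u w huB hwB hadj hpendB
            constructor
            · refine vd_glue hwcAu (Finset.mem_erase.mpr ⟨hxu, hxA⟩) ?_ ?_
              · rw [Finset.erase_right_comm]; exact hA'e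
              · rw [delN_erase_comm]; exact hBe
            · have hxdelNu : x ∈ delClosedNbhd G A u :=
                mem_delN.mpr ⟨hxA, hxu, hxNu⟩
              refine vd_glue (wc_delN hwcA huA) hxdelNu ?_ ?_
              · rw [← delN_erase_comm]; exact hA'd
              · rw [delN_delN_comm]; exact hBd

lemma pendant_shed (hvd : VertexDecomposableOn G A) {u w : V}
    (huA : u ∈ A) (hwA : w ∈ A) (hadj : G.Adj u w)
    (hpend : ∀ z ∈ A, G.Adj z w → z = u) :
    VertexDecomposableOn G (A.erase u) ∧ VertexDecomposableOn G (delClosedNbhd G A u) :=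
  pendant_shed_aux A.card A le_rfl hvd u w huA hwA hadj hpend

end Work

namespace Work
variable {V : Type*} {G : SimpleGraph V} {A : Finset V} {X : Set V}

lemma bip_matching
    (hX : ∀ u ∈ X, ∀ v ∈ X, ¬ G.Adj u v)
    (hXc : ∀ u ∉ X, ∀ v ∉ X, ¬ G.Adj u v)
    (hwc : WellCoveredOn G A) :
    ∃ f : V → V,
      (∀ v, v ∈ A → (∃ z ∈ A, G.Adj v z) →
         f v ∈ A ∧ G.Adj v (f v) ∧ f (f v) = v) ∧
      (∀ T, IsMaxIndepIn G A T → ∀ v, v ∈ A → (∃ z ∈ A, G.Adj v z) →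
         (v ∈ T ∨ f v ∈ T)) := by
  classical
  set X₁ : Finset V := A.filter (fun v => (∃ z ∈ A, G.Adj v z) ∧ v ∈ X) with hX₁def
  set Y₁ : Finset V := A.filter (fun v => (∃ z ∈ A, G.Adj v z) ∧ v ∉ X) with hY₁def
  set iso : Finset V := A.filter (fun v => ∀ z ∈ A, ¬ G.Adj v z) with hisodef
  have memX₁ : ∀ {v}, v ∈ X₁ ↔ v ∈ A ∧ (∃ z ∈ A, G.Adj v z) ∧ v ∈ X := by
    intro v; simp [hX₁def]
  have memY₁ : ∀ {v}, v ∈ Y₁ ↔ v ∈ A ∧ (∃ z ∈ A, G.Adj v z) ∧ v ∉ X := by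
    intro v; simp [hY₁def]
  have memiso : ∀ {v}, v ∈ iso ↔ v ∈ A ∧ ∀ z ∈ A, ¬ G.Adj v z := by
    intro v; simp [hisodef]
  have hX₁A : X₁ ⊆ A := Finset.filter_subset _ _
  have hY₁A : Y₁ ⊆ A := Finset.filter_subset _ _
  have hisoA : iso ⊆ A := Finset.filter_subset _ _
  have hdisjXY : Disjoint X₁ Y₁ := by
    rw [Finset.disjoint_left]
    intro a ha ha'
    exact (memY₁.mp ha').2.2 (memX₁.mp ha).2.2
  have hdisjXiso : Disjoint X₁ iso := by
    rw [Finset.disjoint_left]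
    intro a ha ha'
    obtain ⟨z, hz, hadj⟩ := (memX₁.mp ha).2.1
    exact (memiso.mp ha').2 z hz hadj
  have hdisjYiso : Disjoint Y₁ iso := by
    rw [Finset.disjoint_left]
    intro a ha ha'
    obtain ⟨z, hz, hadj⟩ := (memY₁.mp ha).2.1
    exact (memiso.mp ha').2 z hz hadj
  have iso_sub : ∀ T, IsMaxIndepIn G A T → iso ⊆ T := by
    intro T hT z hz
    by_contra hzT
    obtain ⟨t, htT, hadj⟩ := exists_nbr_of_max hT (hisoA hz) hzT
    exact (memiso.mp hz).2 t (hT.1.1 htT) hadj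
  -- X₁ ∪ iso is a maximal independent set
  have indXiso : IsIndepIn G A (X₁ ∪ iso) := by
    refine ⟨Finset.union_subset hX₁A hisoA, ?_⟩
    intro a ha b hb
    rcases Finset.mem_union.mp ha with ha' | ha'
    · rcases Finset.mem_union.mp hb with hb' | hb'
      · exact hX a (memX₁.mp ha').2.2 b (memX₁.mp hb').2.2
      · exact fun h => (memiso.mp hb').2 a (hX₁A ha') h.symm
    · exact fun h => (memiso.mp ha').2 b (Finset.mem_union.mp hb |>.elim
        (fun h' => hX₁A h') (fun h' => hisoA h')) h
  have maxX : IsMaxIndepIn G A (X₁ ∪ iso) := by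
    refine ⟨indXiso, ?_⟩
    intro U hU hsub
    refine Finset.Subset.antisymm ?_ hsub
    intro z hzU
    by_contra hz
    have hzA : z ∈ A := hU.1 hzU
    have hznotiso : ¬ (∀ w ∈ A, ¬ G.Adj z w) := fun h =>
      hz (Finset.mem_union_right _ (memiso.mpr ⟨hzA, h⟩))
    push_neg at hznotiso
    obtain ⟨t, htA, hadj⟩ := hznotiso
    have hzX : z ∉ X := fun h =>
      hz (Finset.mem_union_left _ (memX₁.mpr ⟨hzA, ⟨t, htA, hadj⟩, h⟩))
    have htX : t ∈ X := by
      by_contra h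
      exact hXc z hzX t h hadj
    have ht1 : t ∈ X₁ := memX₁.mpr ⟨htA, ⟨z, hzA, hadj.symm⟩, htX⟩
    exact hU.2 z hzU t (hsub (Finset.mem_union_left _ ht1)) hadj
  have indYiso : IsIndepIn G A (Y₁ ∪ iso) := by
    refine ⟨Finset.union_subset hY₁A hisoA, ?_⟩
    intro a ha b hb
    rcases Finset.mem_union.mp ha with ha' | ha'
    · rcases Finset.mem_union.mp hb with hb' | hb'
      · exact hXc a (memY₁.mp ha').2.2 b (memY₁.mp hb').2.2
      · exact fun h => (memiso.mp hb').2 a (hY₁A ha') h.symm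
    · exact fun h => (memiso.mp ha').2 b (Finset.mem_union.mp hb |>.elim
        (fun h' => hY₁A h') (fun h' => hisoA h')) h
  have maxY : IsMaxIndepIn G A (Y₁ ∪ iso) := by
    refine ⟨indYiso, ?_⟩
    intro U hU hsub
    refine Finset.Subset.antisymm ?_ hsub
    intro z hzU
    by_contra hz
    have hzA : z ∈ A := hU.1 hzU
    have hznotiso : ¬ (∀ w ∈ A, ¬ G.Adj z w) := fun h =>
      hz (Finset.mem_union_right _ (memiso.mpr ⟨hzA, h⟩))
    push_neg at hznotiso
    obtain ⟨t, htA, hadj⟩ := hznotiso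
    have hzX : z ∈ X := by
      by_contra h
      exact hz (Finset.mem_union_left _ (memY₁.mpr ⟨hzA, ⟨t, htA, hadj⟩, h⟩))
    have htX : t ∉ X := fun h => hX z hzX t h hadj
    have ht1 : t ∈ Y₁ := memY₁.mpr ⟨htA, ⟨z, hzA, hadj.symm⟩, htX⟩
    exact hU.2 z hzU t (hsub (Finset.mem_union_left _ ht1)) hadj
  have m_eq : X₁.card = Y₁.card := by
    have h := hwc _ _ maxX maxY
    rw [Finset.card_union_of_disjoint hdisjXiso,
      Finset.card_union_of_disjoint hdisjYiso] at h
    omega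
  -- decomposition of any maximal independent set
  have count_max : ∀ T, IsMaxIndepIn G A T →
      (T ∩ X₁).card + (T ∩ Y₁).card = X₁.card := by
    intro T hT
    have hdecomp : T = (T ∩ X₁) ∪ ((T ∩ Y₁) ∪ iso) := by
      ext z
      constructor
      · intro hz
        have hzA : z ∈ A := hT.1.1 hz
        by_cases hnbr : ∃ w ∈ A, G.Adj z w
        · by_cases hzX : z ∈ X
          · exact Finset.mem_union_left _
              (Finset.mem_inter.mpr ⟨hz, memX₁.mpr ⟨hzA, hnbr, hzX⟩⟩)
          · exact Finset.mem_union_right _ (Finset.mem_union_left _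
              (Finset.mem_inter.mpr ⟨hz, memY₁.mpr ⟨hzA, hnbr, hzX⟩⟩))
        · push_neg at hnbr
          exact Finset.mem_union_right _ (Finset.mem_union_right _
            (memiso.mpr ⟨hzA, hnbr⟩))
      · intro hz
        rcases Finset.mem_union.mp hz with h | h
        · exact (Finset.mem_inter.mp h).1
        · rcases Finset.mem_union.mp h with h' | h'
          · exact (Finset.mem_inter.mp h').1
          · exact iso_sub T hT h'
    have hd1 : Disjoint (T ∩ X₁) ((T ∩ Y₁) ∪ iso) := by
      refine Finset.disjoint_union_right.mpr ⟨?_, ?_⟩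
      · exact Finset.disjoint_of_subset_left (Finset.inter_subset_right)
          (Finset.disjoint_of_subset_right (Finset.inter_subset_right) hdisjXY)
      · exact Finset.disjoint_of_subset_left (Finset.inter_subset_right) hdisjXiso
    have hd2 : Disjoint (T ∩ Y₁) iso :=
      Finset.disjoint_of_subset_left (Finset.inter_subset_right) hdisjYiso
    have hcard : T.card = (T ∩ X₁).card + ((T ∩ Y₁).card + iso.card) := by
      conv_lhs => rw [hdecomp]
      rw [Finset.card_union_of_disjoint hd1, Finset.card_union_of_disjoint hd2]
    have halpha : T.card = X₁.card + iso.card := by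
      have := hwc _ _ hT maxX
      rw [Finset.card_union_of_disjoint hdisjXiso] at this
      omega
    omega
  -- Hall's condition
  set t : {x // x ∈ X₁} → Finset V := fun p => Y₁.filter (fun y => G.Adj p.1 y) with htdef
  have hall : ∀ s : Finset {x // x ∈ X₁}, s.card ≤ (s.biUnion t).card := by
    intro s
    set S : Finset V := s.image (fun p => p.1) with hSdef
    set NS : Finset V := s.biUnion t with hNSdef
    have hSX₁ : S ⊆ X₁ := by
      intro z hz
      obtain ⟨p, _, rfl⟩ := Finset.mem_image.mp hz
      exact p.2
    have hNSY₁ : NS ⊆ Y₁ := by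
      intro z hz
      obtain ⟨p, _, hzp⟩ := Finset.mem_biUnion.mp hz
      exact (Finset.mem_filter.mp hzp).1
    have hScard : S.card = s.card :=
      Finset.card_image_of_injective s Subtype.val_injective
    -- the independent set W
    have hWind : IsIndepIn G A (S ∪ ((Y₁ \ NS) ∪ iso)) := by
      refine ⟨?_, ?_⟩
      · refine Finset.union_subset (hSX₁.trans hX₁A)
          (Finset.union_subset ((Finset.sdiff_subset).trans hY₁A) hisoA)
      · intro a ha b hb
        have hmem : ∀ c, c ∈ S ∪ ((Y₁ \ NS) ∪ iso) →
            (c ∈ S ∨ c ∈ Y₁ \ NS ∨ c ∈ iso) := by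
          intro c hc
          rcases Finset.mem_union.mp hc with h | h
          · exact Or.inl h
          · rcases Finset.mem_union.mp h with h' | h'
            · exact Or.inr (Or.inl h')
            · exact Or.inr (Or.inr h')
        rcases hmem a ha with ha' | ha' | ha'
        · rcases hmem b hb with hb' | hb' | hb'
          · exact hX a (memX₁.mp (hSX₁ ha')).2.2 b (memX₁.mp (hSX₁ hb')).2.2
          · -- a ∈ S, b ∈ Y₁ \ NS : if adjacent then b ∈ NS
            intro hadj
            obtain ⟨p, hps, hpa⟩ := Finset.mem_image.mp ha'
            have : b ∈ NS := Finset.mem_biUnion.mpr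
              ⟨p, hps, Finset.mem_filter.mpr ⟨(Finset.mem_sdiff.mp hb').1, hpa ▸ hadj⟩⟩
            exact (Finset.mem_sdiff.mp hb').2 this
          · exact fun h => (memiso.mp hb').2 a (hX₁A (hSX₁ ha')) h.symm
        · rcases hmem b hb with hb' | hb' | hb'
          · intro hadj
            obtain ⟨p, hps, hpb⟩ := Finset.mem_image.mp hb'
            have : a ∈ NS := Finset.mem_biUnion.mpr
              ⟨p, hps, Finset.mem_filter.mpr ⟨(Finset.mem_sdiff.mp ha').1, hpb ▸ hadj.symm⟩⟩
            exact (Finset.mem_sdiff.mp ha').2 this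
          · exact hXc a (memY₁.mp (Finset.sdiff_subset ha')).2.2 b
              (memY₁.mp (Finset.sdiff_subset hb')).2.2
          · exact fun h => (memiso.mp hb').2 a (hY₁A (Finset.sdiff_subset ha')) h.symm
        · intro h
          rcases hmem b hb with hb' | hb' | hb'
          · exact (memiso.mp ha').2 b (hX₁A (hSX₁ hb')) h
          · exact (memiso.mp ha').2 b (hY₁A (Finset.sdiff_subset hb')) h
          · exact (memiso.mp ha').2 b (hisoA hb') h
    obtain ⟨T, hWT, hT⟩ := exists_max' hWind
    have hTY : T ∩ Y₁ = Y₁ \ NS := by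
      apply Finset.Subset.antisymm
      · intro y hy
        obtain ⟨hyT, hyY⟩ := Finset.mem_inter.mp hy
        refine Finset.mem_sdiff.mpr ⟨hyY, ?_⟩
        intro hyNS
        obtain ⟨p, hps, hyp⟩ := Finset.mem_biUnion.mp hyNS
        have hpT : p.1 ∈ T := hWT (Finset.mem_union_left _
          (Finset.mem_image.mpr ⟨p, hps, rfl⟩))
        exact hT.1.2 p.1 hpT y hyT (Finset.mem_filter.mp hyp).2
      · intro y hy
        exact Finset.mem_inter.mpr
          ⟨hWT (Finset.mem_union_right _ (Finset.mem_union_left _ hy)),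
           (Finset.mem_sdiff.mp hy).1⟩
    have hcnt := count_max T hT
    have hNScard : (Y₁ \ NS).card = Y₁.card - NS.card := Finset.card_sdiff_of_subset hNSY₁
    have hNSle : NS.card ≤ Y₁.card := Finset.card_le_card hNSY₁
    have hTXge : S.card ≤ (T ∩ X₁).card := by
      apply Finset.card_le_card
      intro z hz
      exact Finset.mem_inter.mpr ⟨hWT (Finset.mem_union_left _ hz), hSX₁ hz⟩
    rw [hTY] at hcnt
    omega
  obtain ⟨g, hginj, hgmem⟩ :=
    (Finset.all_card_le_biUnion_card_iff_exists_injective t).mp hall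
  have hgY : ∀ p, g p ∈ Y₁ := fun p => (Finset.mem_filter.mp (hgmem p)).1
  have hgadj : ∀ p, G.Adj p.1 (g p) := fun p => (Finset.mem_filter.mp (hgmem p)).2
  set Im : Finset V := X₁.attach.image g with hImdef
  have hImY : Im = Y₁ := by
    apply Finset.eq_of_subset_of_card_le
    · intro z hz
      obtain ⟨p, _, rfl⟩ := Finset.mem_image.mp hz
      exact hgY p
    · rw [hImdef, Finset.card_image_of_injective _ hginj, Finset.card_attach]
      omega
  have hpre : ∀ y ∈ Y₁, ∃ p : {x // x ∈ X₁}, g p = y := by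
    intro y hy
    rw [← hImY] at hy
    obtain ⟨p, _, hp⟩ := Finset.mem_image.mp hy
    exact ⟨p, hp⟩
  set f : V → V := fun v =>
    if h : v ∈ X₁ then g ⟨v, h⟩
    else if h' : v ∈ Y₁ then (Classical.choose (hpre v h')).1
    else v with hfdef
  have hfX : ∀ v (h : v ∈ X₁), f v = g ⟨v, h⟩ := by
    intro v h; simp [hfdef, h]
  have hfY : ∀ v (h' : v ∈ Y₁), f v = (Classical.choose (hpre v h')).1 := by
    intro v h'
    have hvX : v ∉ X₁ := Finset.disjoint_right.mp hdisjXY h'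
    simp [hfdef, hvX, h']
  have hfprop : ∀ v, v ∈ A → (∃ z ∈ A, G.Adj v z) →
      f v ∈ A ∧ G.Adj v (f v) ∧ f (f v) = v ∧
      (v ∈ X₁ → f v ∈ Y₁) ∧ (v ∈ Y₁ → f v ∈ X₁) := by
    intro v hvA hnbr
    by_cases hvX : v ∈ X₁
    · have h1 : f v = g ⟨v, hvX⟩ := hfX v hvX
      have h2 : f v ∈ Y₁ := h1 ▸ hgY _
      have h3 : G.Adj v (f v) := h1 ▸ hgadj ⟨v, hvX⟩
      have h4 : f (f v) = v := by
        have h5 := hfY (f v) h2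
        have h6 := Classical.choose_spec (hpre (f v) h2)
        have : Classical.choose (hpre (f v) h2) = ⟨v, hvX⟩ := hginj (by rw [h6, h1])
        rw [h5, this]
      exact ⟨hY₁A h2, h3, h4, fun _ => h2, fun h => absurd h
        (Finset.disjoint_left.mp hdisjXY hvX)⟩
    · have hvY : v ∈ Y₁ := by
        by_cases hvXside : v ∈ X
        · exact absurd (memX₁.mpr ⟨hvA, hnbr, hvXside⟩) hvX
        · exact memY₁.mpr ⟨hvA, hnbr, hvXside⟩
      have h1 : f v = (Classical.choose (hpre v hvY)).1 := hfY v hvY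
      have hspec := Classical.choose_spec (hpre v hvY)
      have h2 : f v ∈ X₁ := h1 ▸ (Classical.choose (hpre v hvY)).2
      have h3 : G.Adj v (f v) := by
        have := hgadj (Classical.choose (hpre v hvY))
        rw [hspec] at this
        rw [h1]; exact this.symm
      have h4 : f (f v) = v := by
        have h5 := hfX (f v) h2
        have : g ⟨f v, h2⟩ = g (Classical.choose (hpre v hvY)) := by
          congr 1
          exact Subtype.ext h1
        rw [h5, this, hspec]
      exact ⟨hX₁A h2, h3, h4, fun h => absurd h hvX, fun _ => h2⟩
  refine ⟨f, fun v hvA hnbr => by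
    obtain ⟨a, b, c, _⟩ := hfprop v hvA hnbr; exact ⟨a, b, c⟩, ?_⟩
  -- exactly-one-per-pair property
  intro T hT v hvA hnbr
  by_contra hcon
  push_neg at hcon
  obtain ⟨hvT, hfvT⟩ := hcon
  obtain ⟨hfvA, hfadj, hffv, hXY, hYX⟩ := hfprop v hvA hnbr
  have hcnt := count_max T hT
  have hd : Disjoint X₁ Y₁ := hdisjXY
  -- image of T ∩ Y₁ under f
  have hinj2 : ∀ a ∈ A, ∀ b ∈ A, (∃ z ∈ A, G.Adj a z) → (∃ z ∈ A, G.Adj b z) →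
      f a = f b → a = b := by
    intro a ha b hb hna hnb heq
    obtain ⟨_, _, hffa, _, _⟩ := hfprop a ha hna
    obtain ⟨_, _, hffb, _, _⟩ := hfprop b hb hnb
    rw [← hffa, heq, hffb]
  have hmemY₁nbr : ∀ y ∈ Y₁, y ∈ A ∧ (∃ z ∈ A, G.Adj y z) := by
    intro y hy; exact ⟨(memY₁.mp hy).1, (memY₁.mp hy).2.1⟩
  have hmemX₁nbr : ∀ y ∈ X₁, y ∈ A ∧ (∃ z ∈ A, G.Adj y z) := by
    intro y hy; exact ⟨(memX₁.mp hy).1, (memX₁.mp hy).2.1⟩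
  have himTY : (T ∩ Y₁).image f ⊆ X₁ \ (T ∩ X₁) := by
    intro z hz
    obtain ⟨y, hy, rfl⟩ := Finset.mem_image.mp hz
    obtain ⟨hyT, hyY⟩ := Finset.mem_inter.mp hy
    obtain ⟨hyA, hynbr⟩ := hmemY₁nbr y hyY
    obtain ⟨hfA, hfadj', _, _, hYX'⟩ := hfprop y hyA hynbr
    refine Finset.mem_sdiff.mpr ⟨hYX' hyY, ?_⟩
    intro hmem
    exact hT.1.2 y hyT (f y) (Finset.mem_inter.mp hmem).1 hfadj'
  have himTX : (T ∩ X₁).image f ⊆ Y₁ \ (T ∩ Y₁) := by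
    intro z hz
    obtain ⟨y, hy, rfl⟩ := Finset.mem_image.mp hz
    obtain ⟨hyT, hyX⟩ := Finset.mem_inter.mp hy
    obtain ⟨hyA, hynbr⟩ := hmemX₁nbr y hyX
    obtain ⟨hfA, hfadj', _, hXY', _⟩ := hfprop y hyA hynbr
    refine Finset.mem_sdiff.mpr ⟨hXY' hyX, ?_⟩
    intro hmem
    exact hT.1.2 y hyT (f y) (Finset.mem_inter.mp hmem).1 hfadj'
  have hinjOnY : Set.InjOn f ↑(T ∩ Y₁) := by
    intro a ha b hb heq
    have ha' := hmemY₁nbr a (Finset.mem_inter.mp ha).2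
    have hb' := hmemY₁nbr b (Finset.mem_inter.mp hb).2
    exact hinj2 a ha'.1 b hb'.1 ha'.2 hb'.2 heq
  have hinjOnX : Set.InjOn f ↑(T ∩ X₁) := by
    intro a ha b hb heq
    have ha' := hmemX₁nbr a (Finset.mem_inter.mp ha).2
    have hb' := hmemX₁nbr b (Finset.mem_inter.mp hb).2
    exact hinj2 a ha'.1 b hb'.1 ha'.2 hb'.2 heq
  have hcardY : ((T ∩ Y₁).image f).card = (T ∩ Y₁).card :=
    Finset.card_image_of_injOn hinjOnY
  have hcardX : ((T ∩ X₁).image f).card = (T ∩ X₁).card :=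
    Finset.card_image_of_injOn hinjOnX
  have hsd1 : (X₁ \ (T ∩ X₁)).card = X₁.card - (T ∩ X₁).card :=
    Finset.card_sdiff_of_subset (Finset.inter_subset_right)
  have hsd2 : (Y₁ \ (T ∩ Y₁)).card = Y₁.card - (T ∩ Y₁).card :=
    Finset.card_sdiff_of_subset (Finset.inter_subset_right)
  have hTXle : (T ∩ X₁).card ≤ X₁.card := Finset.card_le_card Finset.inter_subset_right
  have hTYle : (T ∩ Y₁).card ≤ Y₁.card := Finset.card_le_card Finset.inter_subset_right
  have heqY : (T ∩ Y₁).image f = X₁ \ (T ∩ X₁) := by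
    apply Finset.eq_of_subset_of_card_le himTY
    rw [hcardY, hsd1]
    omega
  have heqX : (T ∩ X₁).image f = Y₁ \ (T ∩ Y₁) := by
    apply Finset.eq_of_subset_of_card_le himTX
    rw [hcardX, hsd2]
    omega
  -- now v ∉ T and f v ∉ T gives a contradiction
  by_cases hvX : v ∈ X₁
  · have : v ∈ X₁ \ (T ∩ X₁) := Finset.mem_sdiff.mpr
      ⟨hvX, fun h => hvT (Finset.mem_inter.mp h).1⟩
    rw [← heqY] at this
    obtain ⟨y, hy, hyv⟩ := Finset.mem_image.mp this
    have hy' := hmemY₁nbr y (Finset.mem_inter.mp hy).2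
    obtain ⟨_, _, hffy, _, _⟩ := hfprop y hy'.1 hy'.2
    have : f v = y := by rw [← hyv, hffy]
    exact hfvT (this ▸ (Finset.mem_inter.mp hy).1)
  · have hvY : v ∈ Y₁ := by
      by_cases hvXside : v ∈ X
      · exact absurd (memX₁.mpr ⟨hvA, hnbr, hvXside⟩) hvX
      · exact memY₁.mpr ⟨hvA, hnbr, hvXside⟩
    have : v ∈ Y₁ \ (T ∩ Y₁) := Finset.mem_sdiff.mpr
      ⟨hvY, fun h => hvT (Finset.mem_inter.mp h).1⟩
    rw [← heqX] at this
    obtain ⟨y, hy, hyv⟩ := Finset.mem_image.mp this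
    have hy' := hmemX₁nbr y (Finset.mem_inter.mp hy).2
    obtain ⟨_, _, hffy, _, _⟩ := hfprop y hy'.1 hy'.2
    have : f v = y := by rw [← hyv, hffy]
    exact hfvT (this ▸ (Finset.mem_inter.mp hy).1)

end Work

namespace Work
variable {V : Type*} {G : SimpleGraph V} {A : Finset V} {X : Set V}

section Bip
variable (hX : ∀ u ∈ X, ∀ v ∈ X, ¬ G.Adj u v)
  (hXc : ∀ u ∉ X, ∀ v ∉ X, ¬ G.Adj u v)

include hX hXc

lemma bip_opp {a b : V} (h : G.Adj a b) : a ∈ X ↔ b ∉ X := by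
  constructor
  · intro ha hb
    exact hX a ha b hb h
  · intro hb
    by_contra ha
    exact hXc a ha b hb h

lemma bip_same_not_adj {a b : V} (h : a ∈ X ↔ b ∈ X) : ¬ G.Adj a b := by
  intro hadj
  have := bip_opp hX hXc hadj
  tauto

lemma partner_pendant (hwc : WellCoveredOn G A) (f : V → V)
    (hf : ∀ v, v ∈ A → (∃ z ∈ A, G.Adj v z) →
       f v ∈ A ∧ G.Adj v (f v) ∧ f (f v) = v)
    {v1 : V} (hv1A : v1 ∈ A) (hnbr : ∃ z ∈ A, G.Adj v1 z)
    (hwc' : WellCoveredOn G (A.erase v1)) :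
    ∀ t ∈ A, G.Adj t (f v1) → t = v1 := by
  intro t htA hadjt
  by_contra htne
  obtain ⟨hv2A, hadj12, hff1⟩ := hf v1 hv1A hnbr
  set v2 := f v1 with hv2def
  set B := delClosedNbhd G A v1 with hBdef
  -- the replacement function
  have hnn : ∃ nn : V → V, ∀ z, (z = v2 → nn z = t) ∧ (z ≠ v2 → nn z = f z) :=
    ⟨fun z => if z = v2 then t else f z, fun z => ⟨fun h => if_pos h, fun h => if_neg h⟩⟩
  obtain ⟨nn, hnndef⟩ := hnn
  have hside : ∀ z, z ∈ A → G.Adj v1 z → (nn z ∈ B ∧ (nn z ∈ X ↔ v1 ∈ X) ∧ G.Adj z (nn z)) := by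
    intro z hzA hadjz
    by_cases hzv2 : z = v2
    · subst hzv2
      have h1 : nn v2 = t := (hnndef v2).1 rfl
      rw [h1]
      have hts : t ∈ X ↔ v1 ∈ X := by
        have o1 := bip_opp hX hXc hadjt
        have o2 := bip_opp hX hXc hadj12
        tauto
      refine ⟨mem_delN.mpr ⟨htA, htne, bip_same_not_adj hX hXc (by tauto)⟩, hts, hadjt.symm⟩
    · have h1 : nn z = f z := (hnndef z).2 hzv2
      rw [h1]
      obtain ⟨hfzA, hadjfz, hffz⟩ := hf z hzA ⟨v1, hv1A, hadjz.symm⟩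
      have hfs : f z ∈ X ↔ v1 ∈ X := by
        have o1 := bip_opp hX hXc hadjfz
        have o2 := bip_opp hX hXc hadjz
        tauto
      have hfzne : f z ≠ v1 := by
        intro h
        apply hzv2
        rw [← hffz, h]
      exact ⟨mem_delN.mpr ⟨hfzA, hfzne, bip_same_not_adj hX hXc (by tauto)⟩, hfs, hadjfz⟩
  set P : Finset V := (A.filter (fun z => G.Adj v1 z)).image nn with hPdef
  have hPB : P ⊆ B := by
    intro p hp
    obtain ⟨z, hz, rfl⟩ := Finset.mem_image.mp hp
    obtain ⟨hzA, hadjz⟩ := Finset.mem_filter.mp hz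
    exact (hside z hzA hadjz).1
  have hPside : ∀ p ∈ P, p ∈ X ↔ v1 ∈ X := by
    intro p hp
    obtain ⟨z, hz, rfl⟩ := Finset.mem_image.mp hp
    obtain ⟨hzA, hadjz⟩ := Finset.mem_filter.mp hz
    exact (hside z hzA hadjz).2.1
  have hPind : IsIndepIn G B P := by
    refine ⟨hPB, ?_⟩
    intro p hp q hq
    apply bip_same_not_adj hX hXc
    rw [hPside p hp, hPside q hq]
  obtain ⟨T', hPT', hT'⟩ := exists_max' hPind
  have hv1T' : v1 ∉ T' := fun h => x_notMem_delN (hT'.1.1 h)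
  -- T' is maximal in A.erase v1
  have hT'max : IsMaxIndepIn G (A.erase v1) T' := by
    refine ⟨⟨hT'.1.1.trans (delN_subset_erase hv1A), hT'.1.2⟩, ?_⟩
    intro U hU hsub
    refine Finset.Subset.antisymm ?_ hsub
    intro z hzU
    by_contra hzT'
    by_cases hzB : z ∈ B
    · have hUB : IsIndepIn G B (U ∩ B) :=
        ⟨Finset.inter_subset_right, fun c hc d hd => hU.2 c (Finset.mem_inter.mp hc).1
          d (Finset.mem_inter.mp hd).1⟩
      have : U ∩ B = T' := hT'.2 _ hUB
        (Finset.subset_inter hsub hT'.1.1)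
      exact hzT' (this ▸ Finset.mem_inter.mpr ⟨hzU, hzB⟩)
    · have hzA : z ∈ A := Finset.mem_of_mem_erase (hU.1 hzU)
      have hzv1 : z ≠ v1 := (Finset.mem_erase.mp (hU.1 hzU)).1
      have hadjz : G.Adj v1 z := by
        by_contra h
        exact hzB (mem_delN.mpr ⟨hzA, hzv1, h⟩)
      have hnz : nn z ∈ P := Finset.mem_image.mpr
        ⟨z, Finset.mem_filter.mpr ⟨hzA, hadjz⟩, rfl⟩
      exact hU.2 z hzU (nn z) (hsub (hPT' hnz)) (hside z hzA hadjz).2.2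
  -- cardinalities
  have hT'' : IsMaxIndepIn G A (insert v1 T') := max_insert_delN hT' hv1A
  obtain ⟨T₀, hv2T₀, hT₀⟩ := exists_max_mem (G := G) hv2A
  have hv1T₀ : v1 ∉ T₀ := fun h => hT₀.1.2 v1 h v2 hv2T₀ hadj12
  have hT₀max : IsMaxIndepIn G (A.erase v1) T₀ := max_restrict hT₀ hv1T₀
  have e1 := hwc _ _ hT'' hT₀
  have e2 := hwc' _ _ hT'max hT₀max
  rw [Finset.card_insert_of_notMem hv1T'] at e1
  omega

end Bip
end Work

namespace Work
variable {V : Type*} {G : SimpleGraph V} {A : Finset V} {X : Set V}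

section Bip2
variable (hX : ∀ u ∈ X, ∀ v ∈ X, ¬ G.Adj u v)
  (hXc : ∀ u ∉ X, ∀ v ∉ X, ¬ G.Adj u v)

include hX hXc

lemma config_core (hwc : WellCoveredOn G A)
    {c1 c2 c3 : V} (hc1 : c1 ∈ A) (hc2 : c2 ∈ A) (hc3 : c3 ∈ A)
    (e12 : G.Adj c1 c2) (e23 : G.Adj c2 c3) (hne : c1 ≠ c3)
    (dom12 : ∀ T, IsMaxIndepIn G A T → c1 ∈ T ∨ c2 ∈ T)
    (hwc1 : WellCoveredOn G (A.erase c1)) : False := by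
  obtain ⟨f, hf, _⟩ := bip_matching hX hXc hwc
  have hpend := partner_pendant hX hXc hwc f hf hc1 ⟨c2, hc2, e12⟩ hwc1
  obtain ⟨hzA, hadj1z, _⟩ := hf c1 hc1 ⟨c2, hc2, e12⟩
  set z := f c1 with hzdef
  have hsame13 : c1 ∈ X ↔ c3 ∈ X := by
    have o1 := bip_opp hX hXc e12
    have o2 := bip_opp hX hXc e23
    tauto
  have hzc3 : z ≠ c3 := by
    intro h
    have o1 := bip_opp hX hXc hadj1z
    rw [h] at o1
    tauto
  have hnadj : ¬ G.Adj z c3 := by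
    intro h
    exact hne (hpend c3 hc3 h.symm).symm
  obtain ⟨T, hsub, hT⟩ := exists_max' (ind_pair hzA hc3 hzc3 hnadj)
  have hzT : z ∈ T := hsub (Finset.mem_insert_self _ _)
  have hc3T : c3 ∈ T := hsub (by simp)
  have hc1T : c1 ∉ T := fun h => hT.1.2 c1 h z hzT hadj1z
  rcases dom12 T hT with h | h
  · exact hc1T h
  · exact hT.1.2 c2 h c3 hc3T e23

end Bip2

lemma dom_persist {s u w : V} (hs : s ∈ A) (hus : u ≠ s) (hws : w ≠ s)
    (hdom : ∀ T, IsMaxIndepIn G A T → u ∈ T ∨ w ∈ T) :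
    ∀ T, IsMaxIndepIn G (A.erase s) T → u ∈ T ∨ w ∈ T := by
  intro T hT
  rcases max_erase_lift hs hT with h | h
  · exact hdom T h
  · rcases hdom _ h with h' | h'
    · rcases Finset.mem_insert.mp h' with h'' | h''
      · exact absurd h''.symm hus.symm
      · exact Or.inl h''
    · rcases Finset.mem_insert.mp h' with h'' | h''
      · exact absurd h''.symm hws.symm
      · exact Or.inr h''

lemma noconfig_aux
    (hX : ∀ u ∈ X, ∀ v ∈ X, ¬ G.Adj u v)
    (hXc : ∀ u ∉ X, ∀ v ∉ X, ¬ G.Adj u v) :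
    ∀ (n : ℕ) (A : Finset V), A.card ≤ n → VertexDecomposableOn G A →
      ∀ a aa b bb : V, a ∈ A → aa ∈ A → b ∈ A → bb ∈ A →
      G.Adj a aa → G.Adj aa b → G.Adj b bb → G.Adj bb a → a ≠ b → aa ≠ bb →
      (∀ T, IsMaxIndepIn G A T → a ∈ T ∨ aa ∈ T) →
      (∀ T, IsMaxIndepIn G A T → b ∈ T ∨ bb ∈ T) → False := by
  intro n
  induction n with
  | zero =>
    intro A hc _ a aa b bb ha _ _ _ _ _ _ _ _ _ _ _
    exact absurd (Finset.card_pos.mpr ⟨a, ha⟩) (by omega)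
  | succ n IH =>
    intro A hc hvd a aa b bb haA haaA hbA hbbA e1 e2 e3 e4 hab haabb dom1 dom2
    rcases vd_cases hvd with hedge | ⟨x, hxA, h1, h2⟩
    · exact hedge a haA aa haaA e1
    · have hwcA := vd_wc hvd
      have hwcx := vd_wc h1
      by_cases hxa : x = a
      · subst hxa
        exact config_core hX hXc hwcA hxA haaA hbA e1 e2 hab dom1 hwcx
      · by_cases hxaa : x = aa
        · subst hxaa
          exact config_core hX hXc hwcA hxA haA hbbA e1.symm e4.symm haabb
            (fun T hT => (dom1 T hT).symm) hwcx
        · by_cases hxb : x = b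
          · subst hxb
            exact config_core hX hXc hwcA hxA hbbA haA e3 e4 hab.symm dom2 hwcx
          · by_cases hxbb : x = bb
            · subst hxbb
              exact config_core hX hXc hwcA hxA hbA haaA e3.symm e2.symm haabb.symm
                (fun T hT => (dom2 T hT).symm) hwcx
            · have hcard : (A.erase x).card ≤ n := by
                have := Finset.card_erase_of_mem hxA
                have : 0 < A.card := Finset.card_pos.mpr ⟨a, haA⟩
                have := Finset.card_erase_of_mem hxA
                omega
              exact IH (A.erase x) hcard h1 a aa b bb
                (Finset.mem_erase.mpr ⟨fun h => hxa h.symm, haA⟩)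
                (Finset.mem_erase.mpr ⟨fun h => hxaa h.symm, haaA⟩)
                (Finset.mem_erase.mpr ⟨fun h => hxb h.symm, hbA⟩)
                (Finset.mem_erase.mpr ⟨fun h => hxbb h.symm, hbbA⟩)
                e1 e2 e3 e4 hab haabb
                (dom_persist hxA (fun h => hxa h.symm) (fun h => hxaa h.symm) dom1)
                (dom_persist hxA (fun h => hxb h.symm) (fun h => hxbb h.symm) dom2)

end Work

namespace Work
variable {V : Type*} {G : SimpleGraph V} {A : Finset V} {X : Set V}

lemma exists_pendant_nbr
    (hX : ∀ u ∈ X, ∀ v ∈ X, ¬ G.Adj u v)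
    (hXc : ∀ u ∉ X, ∀ v ∉ X, ¬ G.Adj u v)
    (hvd : VertexDecomposableOn G A) {v : V} (hvA : v ∈ A)
    (hnbr : ∃ z ∈ A, G.Adj v z) :
    ∃ u w, u ∈ A ∧ w ∈ A ∧ G.Adj u v ∧ G.Adj u w ∧
      (∀ z ∈ A, G.Adj z w → z = u) := by
  classical
  have hwcA := vd_wc hvd
  obtain ⟨f, hf, hEO⟩ := bip_matching hX hXc hwcA
  -- transitivity via matched dominating pairs
  have radj : ∀ p ∈ A, (∃ z ∈ A, G.Adj p z) → ∀ a ∈ A, ∀ b ∈ A,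
      G.Adj p a → G.Adj (f p) b → a ≠ b → G.Adj a b := by
    intro p hpA hpn a haA b hbA hpa hfpb hab
    by_contra hnadj
    obtain ⟨T, hsub, hT⟩ := exists_max' (ind_pair haA hbA hab hnadj)
    have haT : a ∈ T := hsub (Finset.mem_insert_self _ _)
    have hbT : b ∈ T := hsub (by simp)
    rcases hEO T hT p hpA hpn with h | h
    · exact hT.1.2 p h a haT hpa
    · exact hT.1.2 (f p) h b hbT hfpb
  set D : Finset V := A.filter (fun z => G.Adj z v) with hDdef
  have hDne : D.Nonempty := by
    obtain ⟨z, hzA, hadj⟩ := hnbr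
    exact ⟨z, Finset.mem_filter.mpr ⟨hzA, hadj.symm⟩⟩
  obtain ⟨u, huD, humin⟩ := Finset.exists_min_image D
    (fun z => (A.filter (fun y => G.Adj (f z) y)).card) hDne
  obtain ⟨huA, hadjuv⟩ := Finset.mem_filter.mp huD
  have hun : ∃ z ∈ A, G.Adj u z := ⟨v, hvA, hadjuv⟩
  obtain ⟨hfuA, hadjufu, hffu⟩ := hf u huA hun
  refine ⟨u, f u, huA, hfuA, hadjuv, hadjufu, ?_⟩
  intro r hrA hadjr
  by_contra hru
  -- r ≠ v by sides
  have hrv : r ≠ v := by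
    intro h
    subst h
    have o1 := bip_opp hX hXc hadjuv
    have o2 := bip_opp hX hXc hadjufu
    have o3 := bip_opp hX hXc hadjr
    tauto
  -- r is adjacent to v
  have hadjvr : G.Adj v r := radj u huA hun v hvA r hrA hadjuv
    hadjr.symm (fun h => hrv h.symm)
  have hrD : r ∈ D := Finset.mem_filter.mpr ⟨hrA, hadjvr.symm⟩
  have hrn : ∃ z ∈ A, G.Adj r z := ⟨v, hvA, hadjvr.symm⟩
  obtain ⟨hfrA, hadjrfr, hffr⟩ := hf r hrA hrn
  -- N(f r) ⊆ N(f u)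
  have hsub : A.filter (fun y => G.Adj (f r) y) ⊆ A.filter (fun y => G.Adj (f u) y) := by
    intro b hb
    obtain ⟨hbA, hadjb⟩ := Finset.mem_filter.mp hb
    have hfub : f u ≠ b := by
      intro h
      have o1 := bip_opp hX hXc hadjr
      have o2 := bip_opp hX hXc hadjrfr
      have o3 := bip_opp hX hXc hadjb
      rw [← h] at o3
      tauto
    exact Finset.mem_filter.mpr ⟨hbA,
      (radj r hrA hrn (f u) hfuA b hbA hadjr (hadjb.symm.symm) hfub).symm.symm⟩
  have hcardle := humin r hrD
  have heq : A.filter (fun y => G.Adj (f r) y) = A.filter (fun y => G.Adj (f u) y) :=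
    Finset.eq_of_subset_of_card_le hsub (by omega)
  have huNfu : u ∈ A.filter (fun y => G.Adj (f u) y) :=
    Finset.mem_filter.mpr ⟨huA, hadjufu.symm⟩
  have huNfr : G.Adj (f r) u := by
    have := heq ▸ huNfu
    exact (Finset.mem_filter.mp this).2
  -- build the forbidden configuration
  have hfufr : f u ≠ f r := by
    intro h
    apply hru
    rw [← hffr, ← h, hffu]
  exact noconfig_aux hX hXc A.card A le_rfl hvd u (f u) r (f r)
    huA hfuA hrA hfrA hadjufu hadjr.symm hadjrfr huNfr
    (fun h => hru h.symm) hfufr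
    (fun T hT => hEO T hT u huA hun)
    (fun T hT => hEO T hT r hrA hrn)

end Work

/-- If a bipartite graph (one whose vertex set is partitioned into two
independent sets) is vertex decomposable, then its set of shedding vertices is a
dominating set. -/
theorem statement9 {V : Type*} [Fintype V] (G : SimpleGraph V)
    (hbip : ∃ A : Set V, (∀ u ∈ A, ∀ v ∈ A, ¬ G.Adj u v) ∧
      (∀ u ∉ A, ∀ v ∉ A, ¬ G.Adj u v))
    (hvd : VertexDecomposable G) :
    IsDominatingSet G (Shed G) := by
  obtain ⟨X, hX, hXc⟩ := hbip
  intro v hvShed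
  by_cases hnbr : ∃ z ∈ (Finset.univ : Finset V), G.Adj v z
  · obtain ⟨u, w, huA, hwA, hadjuv, hadjuw, hpend⟩ :=
      Work.exists_pendant_nbr hX hXc hvd (Finset.mem_univ v) hnbr
    obtain ⟨hs1, hs2⟩ := Work.pendant_shed hvd huA hwA hadjuw hpend
    exact ⟨u, ⟨hs1, hs2⟩, hadjuv⟩
  · push_neg at hnbr
    have hiso : ∀ z ∈ (Finset.univ : Finset V), ¬ G.Adj v z :=
      fun z hz => hnbr z hz
    have h1 : VertexDecomposableOn G (Finset.univ.erase v) :=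
      Work.vd_erase_isolated hvd (Finset.mem_univ v) hiso
    have h2 : VertexDecomposableOn G (delClosedNbhd G Finset.univ v) := by
      rw [Work.delN_eq_erase_of_isolated hiso]
      exact h1
    exact absurd ⟨h1, h2⟩ hvShed
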